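/- arXiv:1205.3599 — 2 statements merged into one kernel-verified Lean document; each statement's English description precedes it below -/
import Mathlib

section
/- For a monomial ideal $I \subseteq S$ and any $k \ge 1$, the expansion commutes with powers: $(I^k)^* = (I^*)^k$. -/
open MvPolynomial

lemma prod_ideal_le {R : Type*} [CommSemiring R] {ι : Type*} (s : Finset ι)
    (f g : ι → Ideal R) (h : ∀ i ∈ s, f i ≤ g i) : ∏ i ∈ s, f i ≤ ∏ i ∈ s, g i := by
  classical
  induction s using Finset.induction with
  | empty => simp
  | insert _ _ hi ih =>
    rw [Finset.prod_insert hi, Finset.prod_insert hi]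
    exact Ideal.mul_mono (h _ (Finset.mem_insert_self _ _))
      (ih fun i hmem => h i (Finset.mem_insert_of_mem hmem))

lemma pow_biSup_le {R : Type*} [CommSemiring R] {ι : Type*} (Q : ι → Ideal R) (A : Set ι)
    (k : ℕ) (hk : 1 ≤ k) :
    (⨆ a ∈ A, Q a) ^ k ≤
      ⨆ (f : Fin k → ι) (_ : ∀ l, f l ∈ A), ∏ l, Q (f l) := by
  obtain ⟨m, rfl⟩ := Nat.exists_eq_add_of_le hk
  clear hk
  induction m with
  | zero =>
    rw [pow_one]
    refine iSup₂_le fun a ha => ?_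
    have := le_iSup₂ (f := fun (f : Fin 1 → ι) (_ : ∀ l, f l ∈ A) => ∏ l, Q (f l))
      (fun _ => a) (fun _ => ha)
    simpa using this
  | succ m ih =>
    have h1 : (⨆ a ∈ A, Q a) ^ (1 + (m + 1)) = (⨆ a ∈ A, Q a) ^ (1 + m) * (⨆ a ∈ A, Q a) := by
      ring
    rw [h1]
    calc (⨆ a ∈ A, Q a) ^ (1 + m) * (⨆ a ∈ A, Q a)
        ≤ (⨆ (f : Fin (1+m) → ι) (_ : ∀ l, f l ∈ A), ∏ l, Q (f l)) * (⨆ a ∈ A, Q a) :=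
          Ideal.mul_mono_left ih
      _ ≤ _ := by
          rw [Submodule.iSup_mul]
          refine iSup_le fun f => ?_
          rw [Submodule.iSup_mul]
          refine iSup_le fun hf => ?_
          rw [Submodule.mul_iSup]
          refine iSup_le fun a => ?_
          rw [Submodule.mul_iSup]
          refine iSup_le fun ha => ?_
          have key : (∏ l, Q (f l)) * Q a
              = ∏ l : Fin (1 + m + 1), Q ((Fin.snoc f a : Fin (1+m+1) → ι) l) := by
            rw [Fin.prod_univ_castSucc]
            simp
          rw [key]
          exact le_iSup₂ (f := fun (g : Fin (1+(m+1)) → ι) (_ : ∀ l, g l ∈ A) =>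
              ∏ l, Q (g l)) (Fin.snoc f a)
            (fun l => Fin.lastCases (by simpa using ha) (fun i => by simpa using hf i) l)

/-- The monomial ideal of `S = K[x_1,…,x_n]` generated by the monomials `x^a`, `a ∈ A`. -/
noncomputable def monIdeal (K : Type*) [Field K] {n : ℕ} (A : Set (Fin n → ℕ)) :
    Ideal (MvPolynomial (Fin n) K) :=
  Ideal.span ((fun a => ∏ j, (X j : MvPolynomial (Fin n) K) ^ a j) '' A)

/-- The expansion `I^* = ∑_{a ∈ A} P_1^{a(1)} ⋯ P_n^{a(n)} ⊆ S^*` of the monomial ideal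
generated by the monomials `x^a`, `a ∈ A`, with respect to the tuple `(i_1,…,i_n)`;
here `P_j = (x_{j1},…,x_{j i_j})`. -/
noncomputable def expIdeal (K : Type*) [Field K] {n : ℕ} (iv : Fin n → ℕ)
    (A : Set (Fin n → ℕ)) : Ideal (MvPolynomial ((j : Fin n) × Fin (iv j)) K) :=
  ⨆ a ∈ A, ∏ j, (Ideal.span (Set.range fun k : Fin (iv j) =>
      (X ⟨j, k⟩ : MvPolynomial ((j : Fin n) × Fin (iv j)) K))) ^ a j

/-- The `K`-algebra homomorphism `π : S^* → S`, `x_{jk} ↦ x_j`. -/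
noncomputable def piHom (K : Type*) [Field K] {n : ℕ} (iv : Fin n → ℕ) :
    MvPolynomial ((j : Fin n) × Fin (iv j)) K →ₐ[K] MvPolynomial (Fin n) K :=
  aeval fun p => X p.1

/-- `(I^k)^* = (I^*)^k`: the `k`-th power of `I` is the monomial ideal generated by the
`k`-fold sums of exponent vectors from `A`, and its expansion is the `k`-th power of `I^*`. -/
theorem expIdeal_pow (K : Type*) [Field K] {n : ℕ} (iv : Fin n → ℕ)
    (hiv : ∀ j, 0 < iv j) (A : Set (Fin n → ℕ)) (k : ℕ) (hk : 1 ≤ k) :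
    expIdeal K iv {c | ∃ f : Fin k → (Fin n → ℕ), (∀ l, f l ∈ A) ∧ c = ∑ l, f l}
      = (expIdeal K iv A) ^ k := by
  set P : Fin n → Ideal (MvPolynomial ((j : Fin n) × Fin (iv j)) K) :=
    fun j => Ideal.span (Set.range fun k : Fin (iv j) =>
      (X ⟨j, k⟩ : MvPolynomial ((j : Fin n) × Fin (iv j)) K)) with hP
  set Q : (Fin n → ℕ) → Ideal (MvPolynomial ((j : Fin n) × Fin (iv j)) K) :=
    fun a => ∏ j, P j ^ a j with hQ
  have hQsum : ∀ (f : Fin k → (Fin n → ℕ)), Q (∑ l, f l) = ∏ l, Q (f l) := by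
    intro f
    simp only [hQ, Finset.sum_apply, Finset.prod_pow_eq_pow_sum]
    rw [Finset.prod_comm]
    simp [Finset.prod_pow_eq_pow_sum]
  have hexp : ∀ B, expIdeal K iv B = ⨆ a ∈ B, Q a := fun B => rfl
  rw [hexp, hexp]
  apply le_antisymm
  · refine iSup₂_le fun c hc => ?_
    obtain ⟨f, hf, rfl⟩ := hc
    rw [hQsum]
    calc ∏ l, Q (f l) ≤ ∏ _l : Fin k, ⨆ a ∈ A, Q a :=
          prod_ideal_le _ _ _ fun l _ => le_iSup₂ (f := fun a (_ : a ∈ A) => Q a) (f l) (hf l)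
      _ = (⨆ a ∈ A, Q a) ^ k := by simp
  · refine le_trans (pow_biSup_le Q A k hk) ?_
    refine iSup₂_le fun f hf => ?_
    rw [← hQsum]
    exact le_iSup₂
      (f := fun c (_ : c ∈ {c | ∃ f : Fin k → (Fin n → ℕ), (∀ l, f l ∈ A) ∧ c = ∑ l, f l}) =>
        Q c) (∑ l, f l) ⟨f, hf, rfl⟩
end

section
/- Let $I$ be a monomial ideal. Then for every $k \ge 1$, the expansion of the $k$-th symbolic power equals the $k$-th symbolic power of the expansion: $(I^{(k)})^* = (I^*)^{(k)}$. -/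
open MvPolynomial

/-- The `k`-th symbolic power of an ideal `I`: the elements `f` such that `s f ∈ I^k`
for some `s` outside every minimal prime of `I`.  (For a monomial ideal this is the
intersection of the primary components of `I^k` at the minimal primes of `I`.) -/
noncomputable def symbolicPower {R : Type*} [CommRing R] (I : Ideal R) (k : ℕ) : Ideal R where
  carrier := {f | ∃ s : R, (∀ P ∈ I.minimalPrimes, s ∉ P) ∧ s * f ∈ I ^ k}
  zero_mem' := ⟨1, fun P hP h1 => hP.1.1.ne_top ((Ideal.eq_top_iff_one P).2 h1),
    by simp⟩
  add_mem' := by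
    rintro a b ⟨s, hs, hsa⟩ ⟨t, ht, htb⟩
    refine ⟨s * t, fun P hP hst => ?_, ?_⟩
    · rcases hP.1.1.mem_or_mem hst with h | h
      exacts [hs P hP h, ht P hP h]
    · have : s * t * (a + b) = t * (s * a) + s * (t * b) := by ring
      rw [this]
      exact Ideal.add_mem _ (Ideal.mul_mem_left _ _ hsa) (Ideal.mul_mem_left _ _ htb)
  smul_mem' := by
    rintro c a ⟨s, hs, hsa⟩
    refine ⟨s, hs, ?_⟩
    have : s * (c • a) = c * (s * a) := by simp [smul_eq_mul]; ring
    rw [this]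
    exact Ideal.mul_mem_left _ _ hsa


open Pointwise
open scoped Classical
set_option maxHeartbeats 1600000

namespace ExpAux

variable {K : Type*} [Field K] {σ : Type*}

noncomputable def spanMon (K : Type*) [Field K] {σ : Type*} (E : Set (σ →₀ ℕ)) :
    Ideal (MvPolynomial σ K) :=
  Ideal.span ((fun e => monomial e (1 : K)) '' E)

theorem mem_spanMon {E : Set (σ →₀ ℕ)} {f : MvPolynomial σ K} :
    f ∈ spanMon K E ↔ ∀ d ∈ f.support, ∃ e ∈ E, e ≤ d :=
  mem_ideal_span_monomial_image

theorem monomial_mem_spanMon {E : Set (σ →₀ ℕ)} {d : σ →₀ ℕ} (e : σ →₀ ℕ)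
    (he : e ∈ E) (hle : e ≤ d) (c : K) : monomial d c ∈ spanMon K E := by
  rw [mem_spanMon]
  intro d' hd'
  rw [support_monomial] at hd'
  have : d' = d := by
    by_cases hc : c = 0 <;> simp [hc] at hd'
    · exact hd'
  exact ⟨e, he, this ▸ hle⟩

theorem spanMon_mul (E E' : Set (σ →₀ ℕ)) :
    spanMon K E * spanMon K E' = spanMon K (E + E') := by
  unfold spanMon
  rw [Ideal.span_mul_span']
  congr 1
  ext x
  constructor
  · rintro ⟨y, hy, z, hz, rfl⟩
    rcases hy with ⟨e, he, rfl⟩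
    rcases hz with ⟨e', he', rfl⟩
    refine ⟨e + e', ⟨e, he, e', he', rfl⟩, ?_⟩
    simp [monomial_mul]
  · rintro ⟨d, ⟨e, he, e', he', rfl⟩, rfl⟩
    exact ⟨monomial e 1, ⟨e, he, rfl⟩, monomial e' 1, ⟨e', he', rfl⟩, by simp [monomial_mul]⟩

def kSum (E : Set (σ →₀ ℕ)) (k : ℕ) : Set (σ →₀ ℕ) :=
  {d | ∃ g : Fin k → (σ →₀ ℕ), (∀ i, g i ∈ E) ∧ ∑ i, g i = d}

theorem kSum_succ (E : Set (σ →₀ ℕ)) (k : ℕ) : kSum E (k + 1) = kSum E k + E := by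
  ext d
  rw [Set.mem_add]
  constructor
  · rintro ⟨g, hg, rfl⟩
    refine ⟨∑ i : Fin k, g i.castSucc, ⟨fun i => g i.castSucc, fun i => hg _, rfl⟩,
      g (Fin.last k), hg _, (Fin.sum_univ_castSucc g).symm⟩
  · rintro ⟨t, ⟨g, hg, rfl⟩, e, he, rfl⟩
    refine ⟨Fin.snoc g e, ?_, ?_⟩
    · intro i
      refine Fin.lastCases ?_ ?_ i
      · simp only [Fin.snoc_last]; exact he
      · intro i; simp only [Fin.snoc_castSucc]; exact hg i
    · rw [Fin.sum_univ_castSucc]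
      simp

theorem spanMon_pow (E : Set (σ →₀ ℕ)) (k : ℕ) :
    spanMon K E ^ k = spanMon K (kSum E k) := by
  induction k with
  | zero =>
    rw [pow_zero]
    have : kSum E 0 = {(0 : σ →₀ ℕ)} := by
      ext d
      simp [kSum, eq_comm]
    rw [this]
    symm
    rw [Ideal.one_eq_top, Ideal.eq_top_iff_one]
    have := monomial_mem_spanMon (K := K) (E := ({0} : Set (σ →₀ ℕ))) (d := 0) 0 rfl le_rfl 1
    simpa using this
  | succ k ih =>
    rw [pow_succ, ih, spanMon_mul, kSum_succ]

theorem spanMon_mono {E E' : Set (σ →₀ ℕ)} (h : E ⊆ E') : spanMon K E ≤ spanMon K E' :=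
  Ideal.span_mono (Set.image_mono h)

/-! ### selection lemma -/

noncomputable def spanX (K : Type*) [Field K] {σ : Type*} (V : Set σ) :
    Ideal (MvPolynomial σ K) :=
  Ideal.span (X '' V)

theorem mem_spanX {V : Set σ} {f : MvPolynomial σ K} :
    f ∈ spanX K V ↔ ∀ m ∈ f.support, ∃ i ∈ V, m i ≠ 0 :=
  mem_ideal_span_X_image

theorem X_mem_spanX {V : Set σ} {j : σ} : (X j : MvPolynomial σ K) ∈ spanX K V ↔ j ∈ V := by
  constructor
  · intro h
    rw [mem_spanX] at h
    obtain ⟨i, hi, hne⟩ := h (Finsupp.single j 1) (by rw [support_X]; simp)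
    rw [Finsupp.single_apply] at hne
    split at hne
    · next h' => exact h' ▸ hi
    · exact absurd rfl hne
  · intro h
    exact Ideal.subset_span ⟨j, h, rfl⟩

theorem spanX_isPrime (V : Set σ) : (spanX K V).IsPrime := by
  set φ : MvPolynomial σ K →ₐ[K] MvPolynomial σ K :=
    aeval (fun j => if j ∈ V then (0 : MvPolynomial σ K) else X j) with hφdef
  have hsub : ∀ p : MvPolynomial σ K, p - φ p ∈ spanX K V := by
    intro p
    induction p using MvPolynomial.induction_on with
    | C a =>
      have : C a - φ (C a) = 0 := by simp [hφdef, aeval_C]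
      rw [this]; exact (spanX K V).zero_mem
    | add p q hp hq =>
      have : p + q - φ (p + q) = (p - φ p) + (q - φ q) := by rw [map_add]; ring
      rw [this]; exact Ideal.add_mem _ hp hq
    | mul_X p j hp =>
      rw [map_mul, aeval_X]
      by_cases hj : j ∈ V
      · simp only [hj, if_true, mul_zero, sub_zero]
        exact Ideal.mul_mem_left _ _ (X_mem_spanX.2 hj)
      · simp only [hj, if_false]
        have : p * X j - φ p * X j = (p - φ p) * X j := by ring
        rw [this]
        exact Ideal.mul_mem_right _ _ hp
  have hker : ∀ f : MvPolynomial σ K, f ∈ spanX K V ↔ φ f = 0 := by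
    intro f
    constructor
    · intro hf
      have hle : spanX K V ≤ RingHom.ker (φ : MvPolynomial σ K →+* MvPolynomial σ K) := by
        rw [spanX, Ideal.span_le]
        rintro x ⟨j, hj, rfl⟩
        simp [RingHom.mem_ker, hφdef, hj]
      exact hle hf
    · intro h0
      have := hsub f
      rw [h0, sub_zero] at this
      exact this
  constructor
  · intro htop
    have : (1 : MvPolynomial σ K) ∈ spanX K V := htop ▸ Submodule.mem_top
    rw [hker] at this
    simp at this
  · intro a b hab
    rw [hker, map_mul, mul_eq_zero] at hab
    rw [hker, hker]
    exact hab

/-- geometric bound -/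

theorem geo_aux (M : ℕ) (hM : 1 ≤ M) : ∀ KK : ℕ,
    (M - 1) * ∑ i ∈ Finset.range KK, M ^ i + 1 = M ^ KK := by
  intro KK
  induction KK with
  | zero => simp
  | succ KK ih =>
    rw [Finset.sum_range_succ, Nat.mul_add, pow_succ]
    have : (M - 1) * ∑ i ∈ Finset.range KK, M ^ i + (M - 1) * M ^ KK + 1
        = ((M - 1) * ∑ i ∈ Finset.range KK, M ^ i + 1) + (M - 1) * M ^ KK := by ring
    rw [this, ih]
    have : M ^ KK + (M - 1) * M ^ KK = (1 + (M - 1)) * M ^ KK := by ring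
    rw [this, show 1 + (M - 1) = M from by omega, mul_comm]

theorem sum_lt_pow (M : ℕ) (hM : 2 ≤ M) (t : Finset σ) (κ : σ → ℕ) (hκ : Set.InjOn κ t)
    (KK : ℕ) (hκlt : ∀ j ∈ t, κ j < KK) (u : σ → ℕ) (hu : ∀ j ∈ t, u j < M) :
    ∑ j ∈ t, u j * M ^ κ j < M ^ KK := by
  have h1 : ∑ j ∈ t, u j * M ^ κ j ≤ ∑ j ∈ t, (M - 1) * M ^ κ j := by
    apply Finset.sum_le_sum
    intro j hj
    exact Nat.mul_le_mul_right _ (by have := hu j hj; omega)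
  have h2 : ∑ j ∈ t, (M - 1) * M ^ κ j = (M - 1) * ∑ j ∈ t, M ^ κ j := by
    rw [Finset.mul_sum]
  have h3 : ∑ j ∈ t, M ^ κ j = ∑ i ∈ t.image κ, M ^ i := by
    rw [Finset.sum_image]
    intro x hx y hy hxy
    exact hκ hx hy hxy
  have h4 : ∑ i ∈ t.image κ, M ^ i ≤ ∑ i ∈ Finset.range KK, M ^ i := by
    apply Finset.sum_le_sum_of_subset
    intro i hi
    rw [Finset.mem_image] at hi
    obtain ⟨j, hj, rfl⟩ := hi
    rw [Finset.mem_range]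
    exact hκlt j hj
  have := geo_aux M (by omega) KK
  calc ∑ j ∈ t, u j * M ^ κ j ≤ (M - 1) * ∑ i ∈ t.image κ, M ^ i := by rw [← h3, ← h2]; exact h1
    _ ≤ (M - 1) * ∑ i ∈ Finset.range KK, M ^ i := Nat.mul_le_mul_left _ h4
    _ < M ^ KK := by omega

theorem dig (M : ℕ) (hM : 2 ≤ M) (t : Finset σ) (κ : σ → ℕ) (hκ : Set.InjOn κ t)
    (v w : σ → ℕ) (hv : ∀ j ∈ t, v j < M) (hw : ∀ j ∈ t, w j < M)
    (hsum : ∑ j ∈ t, v j * M ^ κ j = ∑ j ∈ t, w j * M ^ κ j) : ∀ j ∈ t, v j = w j := by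
  classical
  induction t using Finset.strongInduction with
  | _ t ih =>
    intro j hj
    obtain ⟨jm, hjm, hmax⟩ := Finset.exists_max_image t κ ⟨j, hj⟩
    have hvsplit : ∑ x ∈ t, v x * M ^ κ x
        = v jm * M ^ κ jm + ∑ x ∈ t.erase jm, v x * M ^ κ x :=
      (Finset.add_sum_erase t _ hjm).symm
    have hwsplit : ∑ x ∈ t, w x * M ^ κ x
        = w jm * M ^ κ jm + ∑ x ∈ t.erase jm, w x * M ^ κ x :=
      (Finset.add_sum_erase t _ hjm).symm
    have hκe : ∀ x ∈ t.erase jm, κ x < κ jm + 1 := by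
      intro x hx
      have hxt := Finset.mem_of_mem_erase hx
      have hne := Finset.ne_of_mem_erase hx
      have := hmax x hxt
      rcases lt_or_eq_of_le this with h | h
      · omega
      · exact absurd (hκ hxt hjm h) hne
    have hκe' : ∀ x ∈ t.erase jm, κ x < κ jm := fun x hx => by
      have := hκe x hx
      have hxt := Finset.mem_of_mem_erase hx
      have hne := Finset.ne_of_mem_erase hx
      rcases Nat.lt_or_ge (κ x) (κ jm) with h | h
      · exact h
      · have : κ x = κ jm := by omega
        exact absurd (hκ hxt hjm this) hne
    have hRv : ∑ x ∈ t.erase jm, v x * M ^ κ x < M ^ κ jm :=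
      sum_lt_pow M hM _ κ (hκ.mono (Finset.coe_subset.2 (Finset.erase_subset _ _))) _
        hκe' v (fun x hx => hv x (Finset.mem_of_mem_erase hx))
    have hRw : ∑ x ∈ t.erase jm, w x * M ^ κ x < M ^ κ jm :=
      sum_lt_pow M hM _ κ (hκ.mono (Finset.coe_subset.2 (Finset.erase_subset _ _))) _
        hκe' w (fun x hx => hw x (Finset.mem_of_mem_erase hx))
    have hMk : 0 < M ^ κ jm := Nat.pow_pos (by omega)
    have hjm_eq : v jm = w jm := by
      have h1 : (v jm * M ^ κ jm + ∑ x ∈ t.erase jm, v x * M ^ κ x) / M ^ κ jm = v jm := by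
        rw [mul_comm, Nat.mul_add_div hMk, Nat.div_eq_of_lt hRv, add_zero]
      have h2 : (w jm * M ^ κ jm + ∑ x ∈ t.erase jm, w x * M ^ κ x) / M ^ κ jm = w jm := by
        rw [mul_comm, Nat.mul_add_div hMk, Nat.div_eq_of_lt hRw, add_zero]
      rw [← h1, ← h2, ← hvsplit, ← hwsplit, hsum]
    have hrest : ∑ x ∈ t.erase jm, v x * M ^ κ x = ∑ x ∈ t.erase jm, w x * M ^ κ x := by
      rw [hvsplit, hwsplit, hjm_eq] at hsum
      omega
    rcases eq_or_ne j jm with rfl | hne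
    · exact hjm_eq
    · exact ih (t.erase jm) (Finset.erase_ssubset hjm)
        (hκ.mono (Finset.coe_subset.2 (Finset.erase_subset _ _)))
        (fun x hx => hv x (Finset.mem_of_mem_erase hx))
        (fun x hx => hw x (Finset.mem_of_mem_erase hx))
        hrest j (Finset.mem_erase.2 ⟨hne, hj⟩)

theorem corner [Fintype σ] (V : Set σ) (s f : MvPolynomial σ K) (hf : f ≠ 0)
    (m₀ : σ →₀ ℕ) (hm₀ : m₀ ∈ s.support) (hm₀V : ∀ j ∈ V, m₀ j = 0) :
    ∃ m ∈ s.support, ∃ d ∈ f.support, (∀ j ∈ V, m j = 0) ∧ m + d ∈ (s * f).support := by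
  classical
  set N := Fintype.card σ with hN
  set e := Fintype.equivFin σ with he
  set b : ℕ := (s.support ∪ f.support).sup (fun v => ∑ j : σ, v j) with hb
  have hcoord : ∀ v ∈ s.support ∪ f.support, ∀ j : σ, v j ≤ b := by
    intro v hv j
    calc v j ≤ ∑ j' : σ, v j' := Finset.single_le_sum (fun _ _ => Nat.zero_le _) (Finset.mem_univ j)
      _ ≤ b := Finset.le_sup (f := fun v => ∑ j : σ, v j) hv
  set M : ℕ := 2 * b + 2 with hM
  have hM2 : 2 ≤ M := by omega
  set κ : σ → ℕ := fun j => if j ∈ V then N + e j else (e j : ℕ) with hκ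
  have hκinj : Function.Injective κ := by
    intro x y hxy
    simp only [hκ] at hxy
    have hex : (e x : ℕ) < N := (e x).2
    have hey : (e y : ℕ) < N := (e y).2
    split at hxy <;> split at hxy <;>
      first
        | (exact e.injective (Fin.val_injective (by omega)))
        | omega
  set w : (σ →₀ ℕ) → ℕ := fun v => ∑ j : σ, v j * M ^ κ j with hw
  have hwadd : ∀ v v' : σ →₀ ℕ, w (v + v') = w v + w v' := by
    intro v v'
    simp only [hw, Finsupp.add_apply, add_mul, Finset.sum_add_distrib]
  -- minimizers
  obtain ⟨ms, hms, hmsmin⟩ := Finset.exists_min_image s.support w ⟨m₀, hm₀⟩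
  obtain ⟨ds, hds, hdsmin⟩ := Finset.exists_min_image f.support w
    (MvPolynomial.support_nonempty.2 hf)
  -- V-coordinates of ms vanish
  have hmsV : ∀ j ∈ V, ms j = 0 := by
    by_contra hcon
    push_neg at hcon
    obtain ⟨j₀, hj₀V, hj₀⟩ := hcon
    have hlow : M ^ N ≤ w ms := by
      have : ms j₀ * M ^ κ j₀ ≤ w ms :=
        Finset.single_le_sum (f := fun j => ms j * M ^ κ j) (fun _ _ => Nat.zero_le _)
          (Finset.mem_univ j₀)
      have hκj₀ : κ j₀ = N + e j₀ := by simp [hκ, hj₀V]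
      have h1 : M ^ N ≤ M ^ κ j₀ := by
        rw [hκj₀]; exact Nat.pow_le_pow_right (by omega) (by omega)
      have h2 : M ^ κ j₀ ≤ ms j₀ * M ^ κ j₀ := Nat.le_mul_of_pos_left _ (by omega)
      omega
    have hupp : w m₀ < M ^ N := by
      have : w m₀ = ∑ j ∈ Finset.univ.filter (fun j => j ∉ V), m₀ j * M ^ κ j := by
        simp only [hw]
        rw [← Finset.sum_filter_add_sum_filter_not Finset.univ (fun j => j ∉ V)]
        have : ∑ j ∈ Finset.univ.filter (fun j => ¬ j ∉ V), m₀ j * M ^ κ j = 0 := by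
          apply Finset.sum_eq_zero
          intro j hj
          rw [Finset.mem_filter] at hj
          have : m₀ j = 0 := hm₀V j (by tauto)
          simp [this]
        omega
      rw [this]
      apply sum_lt_pow M hM2 _ κ (hκinj.injOn)
      · intro j hj
        rw [Finset.mem_filter] at hj
        simp only [hκ, if_neg hj.2]
        exact (e j).2
      · intro j _
        have := hcoord m₀ (Finset.mem_union_left _ hm₀) j
        omega
    have := hmsmin m₀ hm₀
    omega
  refine ⟨ms, hms, ds, hds, hmsV, ?_⟩
  rw [mem_support_iff, coeff_mul]
  rw [Finset.sum_eq_single_of_mem (ms, ds) (by simp)]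
  · exact mul_ne_zero (mem_support_iff.1 hms) (mem_support_iff.1 hds)
  · rintro ⟨m, d⟩ hmem hne
    rw [Finset.HasAntidiagonal.mem_antidiagonal] at hmem
    by_contra hcon
    have hmne : coeff m s ≠ 0 := fun h => hcon (by simp [h])
    have hdne : coeff d f ≠ 0 := fun h => hcon (by simp [h])
    have hm : m ∈ s.support := mem_support_iff.2 hmne
    have hd : d ∈ f.support := mem_support_iff.2 hdne
    have h1 : w ms ≤ w m := hmsmin m hm
    have h2 : w ds ≤ w d := hdsmin d hd
    have h3 : w m + w d = w ms + w ds := by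
      rw [← hwadd, ← hwadd, hmem]
    have h4 : w m = w ms := by omega
    have hmeq : m = ms := by
      apply Finsupp.ext
      intro j
      refine dig M hM2 Finset.univ κ hκinj.injOn _ _ ?_ ?_ h4 j (Finset.mem_univ j)
      · intro j' _
        have := hcoord m (Finset.mem_union_left _ hm) j'
        omega
      · intro j' _
        have := hcoord ms (Finset.mem_union_left _ hms) j'
        omega
    have hdeq : d = ds := by
      have : m + d = ms + ds := hmem
      rw [hmeq] at this
      exact add_left_cancel this
    exact hne (by rw [hmeq, hdeq])

theorem colon [Fintype σ] (V : Set σ) (E : Set (σ →₀ ℕ)) (s f : MvPolynomial σ K)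
    (hs : s ∉ spanX K V) (hsf : s * f ∈ spanMon K E) :
    ∀ d ∈ f.support, ∃ u ∈ E, ∀ j ∈ V, u j ≤ d j := by
  classical
  suffices H : ∀ c : ℕ, ∀ s f : MvPolynomial σ K, s ∉ spanX K V → s * f ∈ spanMon K E →
      f.support.card ≤ c → ∀ d ∈ f.support, ∃ u ∈ E, ∀ j ∈ V, u j ≤ d j by
    exact fun d hd => H f.support.card s f hs hsf le_rfl d hd
  intro c
  induction c with
  | zero =>
    intro s f _ _ hcard d hd
    rw [Nat.le_zero, Finset.card_eq_zero] at hcard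
    rw [hcard] at hd
    simp at hd
  | succ c ih =>
    intro s f hs hsf hcard d hd
    have hf : f ≠ 0 := by rintro rfl; simp at hd
    obtain ⟨m₀, hm₀, hm₀V⟩ : ∃ m₀ ∈ s.support, ∀ j ∈ V, m₀ j = 0 := by
      rw [mem_spanX] at hs
      push_neg at hs
      obtain ⟨m₀, hm₀, hV⟩ := hs
      exact ⟨m₀, hm₀, hV⟩
    obtain ⟨ms, hms, ds, hds, hmsV, hprod⟩ := corner V s f hf m₀ hm₀ hm₀V
    obtain ⟨u, hu, hule⟩ := mem_spanMon.1 hsf _ hprod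
    have hcond : ∀ j ∈ V, u j ≤ ds j := by
      intro j hj
      have := hule j
      simp only [Finsupp.add_apply] at this
      have := hmsV j hj
      omega
    set NN : ℕ := ∑ j : σ, ms j with hNN
    set ν : σ →₀ ℕ := Finsupp.equivFunOnFinite.symm (fun j => if j ∈ V then 0 else NN) with hν
    have hνapp : ∀ j : σ, ν j = if j ∈ V then 0 else NN := fun j => rfl
    have huν : u ≤ ν + ds := by
      intro j
      simp only [Finsupp.add_apply, hνapp]
      by_cases hj : j ∈ V
      · simp only [hj, if_true, zero_add]
        exact hcond j hj
      · simp only [hj, if_false]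
        have h1 := hule j
        simp only [Finsupp.add_apply] at h1
        have h2 : ms j ≤ NN :=
          Finset.single_le_sum (f := fun j' => ms j') (fun _ _ => Nat.zero_le _) (Finset.mem_univ j)
        omega
    set wpoly : MvPolynomial σ K := monomial ν 1 with hwp
    have hwnot : wpoly ∉ spanX K V := by
      rw [mem_spanX]
      push_neg
      refine ⟨ν, ?_, ?_⟩
      · rw [hwp, support_monomial, if_neg one_ne_zero]; simp
      · intro j hj
        simp [hνapp, hj]
    have hs' : s * wpoly ∉ spanX K V := by
      intro hmem
      rcases (spanX_isPrime (K := K) V).mem_or_mem hmem with h | h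
      exacts [hs h, hwnot h]
    set f' : MvPolynomial σ K := f - monomial ds (coeff ds f) with hf'
    have hcoeff' : ∀ x, coeff x f' = if x = ds then 0 else coeff x f := by
      intro x
      rw [hf', coeff_sub, coeff_monomial]
      by_cases h : x = ds
      · subst h; simp
      · rw [if_neg (fun hh => h hh.symm), if_neg h, sub_zero]
    have hsupp' : f'.support = f.support.erase ds := by
      ext x
      rw [mem_support_iff, Finset.mem_erase, mem_support_iff, hcoeff']
      split
      · next h => subst h; simp
      · next h => simp [h]
    have hmemf' : s * wpoly * f' ∈ spanMon K E := by
      have hmon : wpoly * monomial ds (coeff ds f) = monomial (ν + ds) (coeff ds f) := by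
        rw [hwp, monomial_mul, one_mul]
      have hkey : s * wpoly * f' = wpoly * (s * f) - s * monomial (ν + ds) (coeff ds f) := by
        rw [hf', ← hmon]; ring
      rw [hkey]
      exact Ideal.sub_mem _ (Ideal.mul_mem_left _ _ hsf)
        (Ideal.mul_mem_left _ _ (monomial_mem_spanMon u hu huν _))
    have hcard' : f'.support.card ≤ c := by
      rw [hsupp']
      have := Finset.card_erase_of_mem hds
      omega
    rcases eq_or_ne d ds with rfl | hne
    · exact ⟨u, hu, hcond⟩
    · have hd' : d ∈ f'.support := by
        rw [hsupp', Finset.mem_erase]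
        exact ⟨hne, hd⟩
      exact ih (s * wpoly) f' hs' hmemf' hcard' d hd'

theorem build [Fintype σ] {ι : Type*} (𝔉 : Finset ι) (Vf : ι → Set σ)
    (hinj : ∀ F ∈ 𝔉, ∀ F' ∈ 𝔉, Vf F = Vf F' → F = F')
    (E : Set (σ →₀ ℕ)) (d : σ →₀ ℕ)
    (hcond : ∀ F ∈ 𝔉, ∃ u ∈ E, ∀ j ∈ Vf F, u j ≤ d j) :
    ∃ s : MvPolynomial σ K, (∀ F ∈ 𝔉, s ∉ spanX K (Vf F)) ∧
      s * monomial d 1 ∈ spanMon K E := by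
  classical
  set uF : ι → (σ →₀ ℕ) := fun F => if h : F ∈ 𝔉 then (hcond F h).choose else 0 with huF
  have huE : ∀ F ∈ 𝔉, uF F ∈ E := by
    intro F hF
    simp only [huF, dif_pos hF]
    exact (hcond F hF).choose_spec.1
  have huV : ∀ F ∈ 𝔉, ∀ j ∈ Vf F, uF F j ≤ d j := by
    intro F hF
    simp only [huF, dif_pos hF]
    exact (hcond F hF).choose_spec.2
  set NN : ℕ := 1 + ∑ F ∈ 𝔉, ∑ j : σ, uF F j with hNN
  have hNN1 : 1 ≤ NN := by omega
  have hub : ∀ F ∈ 𝔉, ∀ j : σ, uF F j < NN := by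
    intro F hF j
    have h1 : uF F j ≤ ∑ j' : σ, uF F j' :=
      Finset.single_le_sum (f := fun j' => uF F j') (fun _ _ => Nat.zero_le _) (Finset.mem_univ j)
    have h2 : ∑ j' : σ, uF F j' ≤ ∑ F' ∈ 𝔉, ∑ j' : σ, uF F' j' :=
      Finset.single_le_sum (f := fun F' => ∑ j' : σ, uF F' j') (fun _ _ => Nat.zero_le _) hF
    omega
  set νF : ι → (σ →₀ ℕ) :=
    fun F => Finsupp.equivFunOnFinite.symm (fun j => if j ∈ Vf F then 0 else NN) with hνF
  have hνapp : ∀ F, ∀ j : σ, νF F j = if j ∈ Vf F then 0 else NN := fun F j => rfl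
  refine ⟨∑ F ∈ 𝔉, monomial (νF F) (1 : K), ?_, ?_⟩
  · intro F₀ hF₀
    rw [mem_spanX]
    push_neg
    refine ⟨νF F₀, ?_, ?_⟩
    · rw [mem_support_iff]
      have : coeff (νF F₀) (∑ F ∈ 𝔉, monomial (νF F) (1 : K)) = 1 := by
        rw [coeff_sum, Finset.sum_eq_single_of_mem F₀ hF₀]
        · rw [coeff_monomial, if_pos rfl]
        · intro F hF hne
          rw [coeff_monomial, if_neg]
          intro heq
          apply hne
          apply hinj F hF F₀ hF₀
          ext j
          constructor
          · intro hj
            have := congrArg (fun v : σ →₀ ℕ => v j) heq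
            simp only [hνapp, hj, if_true] at this
            by_contra hj₀
            rw [if_neg hj₀] at this
            omega
          · intro hj
            have := congrArg (fun v : σ →₀ ℕ => v j) heq
            simp only [hνapp, hj, if_true] at this
            by_contra hj₀
            rw [if_neg hj₀] at this
            omega
      rw [this]
      exact one_ne_zero
    · intro j hj
      simp [hνapp, hj]
  · rw [Finset.sum_mul]
    apply Ideal.sum_mem
    intro F hF
    rw [monomial_mul, mul_one]
    apply monomial_mem_spanMon (uF F) (huE F hF)
    intro j
    simp only [Finsupp.add_apply, hνapp]
    by_cases hj : j ∈ Vf F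
    · simp only [hj, if_true, zero_add]
      exact huV F hF j hj
    · simp only [hj, if_false]
      have := hub F hF j
      omega

theorem sum_ite_point {m : ℕ} (k₀ : Fin m) (c : ℕ) (u : Fin m → ℕ) :
    ∑ kk, (if kk = k₀ then c else u kk) = c + ∑ kk ∈ Finset.univ.erase k₀, u kk := by
  rw [← Finset.add_sum_erase _ _ (Finset.mem_univ k₀), if_pos rfl]
  congr 1
  apply Finset.sum_congr rfl
  intro x hx
  rw [if_neg (Finset.ne_of_mem_erase hx)]

theorem selectFin : ∀ (t : ℕ) {m : ℕ} (h : Fin m → ℕ), t ≤ ∑ kk, h kk →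
    ∃ h' : Fin m → ℕ, (∀ kk, h' kk ≤ h kk) ∧ ∑ kk, h' kk = t := by
  intro t
  induction t with
  | zero => exact fun h _ => ⟨0, fun _ => Nat.zero_le _, by simp⟩
  | succ t ih =>
    intro m h hle
    have hne : ∑ kk, h kk ≠ 0 := by omega
    obtain ⟨k₀, _, hk₀⟩ := Finset.exists_ne_zero_of_sum_ne_zero hne
    have hsplit : ∑ kk, h kk = h k₀ + ∑ kk ∈ Finset.univ.erase k₀, h kk :=
      (Finset.add_sum_erase _ _ (Finset.mem_univ k₀)).symm
    have hsum₂ : ∑ kk, (if kk = k₀ then h k₀ - 1 else h kk) + 1 = ∑ kk, h kk := by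
      rw [sum_ite_point]
      omega
    have hb : t ≤ ∑ kk, (if kk = k₀ then h k₀ - 1 else h kk) := by omega
    obtain ⟨h', hle', hsum'⟩ := ih (fun kk => if kk = k₀ then h k₀ - 1 else h kk) hb
    refine ⟨fun kk => if kk = k₀ then h' k₀ + 1 else h' kk, ?_, ?_⟩
    · intro kk
      rcases eq_or_ne kk k₀ with rfl | hne'
      · have := hle' kk
        rw [if_pos rfl] at this
        show (if kk = kk then h' kk + 1 else h' kk) ≤ h kk
        rw [if_pos rfl]
        omega
      · have := hle' kk
        rw [if_neg hne'] at this
        show (if kk = k₀ then h' k₀ + 1 else h' kk) ≤ h kk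
        rw [if_neg hne']
        exact this

    · show ∑ kk, (if kk = k₀ then h' k₀ + 1 else h' kk) = t + 1
      rw [sum_ite_point]
      rw [← Finset.add_sum_erase _ h' (Finset.mem_univ k₀)] at hsum'
      omega

/-! ### blocks -/

variable {n : ℕ} {iv : Fin n → ℕ}

variable {n : ℕ} {iv : Fin n → ℕ}

def Dblock (iv : Fin n → ℕ) (e : ((j : Fin n) × Fin (iv j)) →₀ ℕ) : Fin n → ℕ :=
  fun j => ∑ kk : Fin (iv j), e ⟨j, kk⟩

theorem Dblock_add (e e' : ((j : Fin n) × Fin (iv j)) →₀ ℕ) :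
    Dblock iv (e + e') = Dblock iv e + Dblock iv e' := by
  funext j
  simp [Dblock, Finset.sum_add_distrib]

theorem Dblock_mono {e d : ((j : Fin n) × Fin (iv j)) →₀ ℕ} (h : e ≤ d) (j : Fin n) :
    Dblock iv e j ≤ Dblock iv d j :=
  Finset.sum_le_sum fun kk _ => h ⟨j, kk⟩

theorem Dblock_zero_eq : ∀ {e : ((j : Fin n) × Fin (iv j)) →₀ ℕ}, Dblock iv e = 0 → e = 0 := by
  intro e h
  ext p
  rcases p with ⟨j, kk⟩
  have := congrFun h j
  simp only [Dblock, Pi.zero_apply] at this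
  have : e ⟨j, kk⟩ = 0 := by
    by_contra hne
    have h1 : 0 < e ⟨j, kk⟩ := Nat.pos_of_ne_zero hne
    have h2 : e ⟨j, kk⟩ ≤ ∑ kk' : Fin (iv j), e ⟨j, kk'⟩ :=
      Finset.single_le_sum (f := fun kk' => e ⟨j, kk'⟩) (fun _ _ => Nat.zero_le _)
        (Finset.mem_univ kk)
    omega
  simpa using this

theorem split1 (d : ((j : Fin n) × Fin (iv j)) →₀ ℕ) (a : Fin n → ℕ)
    (h : ∀ j, a j ≤ Dblock iv d j) :
    ∃ e : ((j : Fin n) × Fin (iv j)) →₀ ℕ, e ≤ d ∧ Dblock iv e = a := by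
  classical
  have hch : ∀ j : Fin n, ∃ h' : Fin (iv j) → ℕ,
      (∀ kk, h' kk ≤ d ⟨j, kk⟩) ∧ ∑ kk, h' kk = a j :=
    fun j => selectFin (a j) (fun kk => d ⟨j, kk⟩) (h j)
  choose h' hle hsum using hch
  refine ⟨Finsupp.equivFunOnFinite.symm (fun p => h' p.1 p.2), ?_, ?_⟩
  · intro p
    exact hle p.1 p.2
  · funext j
    exact hsum j

theorem split2 : ∀ (k : ℕ) (e : ((j : Fin n) × Fin (iv j)) →₀ ℕ) (g : Fin k → (Fin n → ℕ)),
    Dblock iv e = ∑ i, g i →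
    ∃ E : Fin k → (((j : Fin n) × Fin (iv j)) →₀ ℕ),
      (∀ i, Dblock iv (E i) = g i) ∧ ∑ i, E i = e := by
  intro k
  induction k with
  | zero =>
    intro e g h
    simp only [Finset.univ_eq_empty, Finset.sum_empty] at h
    refine ⟨fun i => 0, fun i => i.elim0, ?_⟩
    rw [Dblock_zero_eq h]
    simp
  | succ k ih =>
    intro e g h
    have h0 : ∀ j, g 0 j ≤ Dblock iv e j := by
      intro j
      rw [h]
      rw [Fin.sum_univ_succ]
      simp only [Pi.add_apply, Finset.sum_apply]
      omega
    obtain ⟨e₀, he₀le, he₀D⟩ := split1 e (g 0) h0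
    have hsub : Dblock iv (e - e₀) = ∑ i : Fin k, g i.succ := by
      funext j
      have h1 : Dblock iv (e - e₀) j = Dblock iv e j - Dblock iv e₀ j := by
        simp only [Dblock]
        rw [eq_tsub_iff_add_eq_of_le (Finset.sum_le_sum fun kk _ => he₀le ⟨j, kk⟩),
          ← Finset.sum_add_distrib]
        apply Finset.sum_congr rfl
        intro kk _
        have := he₀le ⟨j, kk⟩
        simp only [Finsupp.tsub_apply]
        omega
      rw [h1, he₀D, h]
      rw [Fin.sum_univ_succ]
      simp only [Pi.add_apply, Finset.sum_apply]
      omega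
    obtain ⟨E', hE'D, hE'sum⟩ := ih (e - e₀) (fun i => g i.succ) hsub
    refine ⟨Fin.cons e₀ E', ?_, ?_⟩
    · intro i
      refine Fin.cases ?_ ?_ i
      · simpa using he₀D
      · intro i; simpa using hE'D i
    · rw [Fin.sum_univ_succ]
      simp only [Fin.cons_zero, Fin.cons_succ]
      rw [hE'sum]
      exact add_tsub_cancel_of_le he₀le

noncomputable def Pb (K : Type*) [Field K] {n : ℕ} (iv : Fin n → ℕ) (j : Fin n) :
    Ideal (MvPolynomial ((j : Fin n) × Fin (iv j)) K) :=
  Ideal.span (Set.range fun k : Fin (iv j) =>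
      (X ⟨j, k⟩ : MvPolynomial ((j : Fin n) × Fin (iv j)) K))

theorem prod_monomial {ι : Type*} (t : Finset ι) (c : ι → (σ →₀ ℕ)) :
    ∏ i ∈ t, monomial (c i) (1 : K) = monomial (∑ i ∈ t, c i) 1 := by
  classical
  induction t using Finset.induction with
  | empty => simp
  | insert _ _ hx ih =>
    rw [Finset.prod_insert hx, Finset.sum_insert hx, ih, monomial_mul, one_mul]

theorem Dblock_single (j : Fin n) (kk : Fin (iv j)) :
    Dblock iv (Finsupp.single (⟨j, kk⟩ : (j : Fin n) × Fin (iv j)) 1) = Pi.single j 1 := by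
  funext j'
  simp only [Dblock]
  rcases eq_or_ne j' j with rfl | hne
  · rw [Pi.single_eq_same]
    have : ∀ kk' : Fin (iv j'),
        (Finsupp.single (⟨j', kk⟩ : (j : Fin n) × Fin (iv j)) 1) ⟨j', kk'⟩
          = if kk' = kk then 1 else 0 := by
      intro kk'
      rw [Finsupp.single_apply]
      rcases eq_or_ne kk' kk with rfl | hne'
      · simp
      · rw [if_neg, if_neg hne']
        intro hcon
        apply hne'
        have := (Sigma.mk.inj_iff.1 hcon).2
        exact (eq_of_heq this).symm
    rw [Finset.sum_congr rfl fun kk' _ => this kk']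
    rw [sum_ite_point kk 1 (fun _ => 0)]
    simp
  · rw [Pi.single_eq_of_ne hne]
    apply Finset.sum_eq_zero
    intro kk' _
    rw [Finsupp.single_apply, if_neg]
    intro hcon
    exact hne ((Sigma.mk.inj_iff.1 hcon).1).symm

theorem sum_eq_one {m : ℕ} (h : Fin m → ℕ) (hs : ∑ kk, h kk = 1) :
    ∃ kk, h kk = 1 ∧ ∀ kk', kk' ≠ kk → h kk' = 0 := by
  obtain ⟨kk, _, hne⟩ := Finset.exists_ne_zero_of_sum_ne_zero (by omega :
    ∑ kk, h kk ≠ 0)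
  have hsplit : ∑ k', h k' = h kk + ∑ k' ∈ Finset.univ.erase kk, h k' :=
    (Finset.add_sum_erase _ _ (Finset.mem_univ kk)).symm
  have h1 : h kk = 1 ∧ ∑ k' ∈ Finset.univ.erase kk, h k' = 0 := by omega
  refine ⟨kk, h1.1, fun kk' hkk' => ?_⟩
  have := (Finset.sum_eq_zero_iff).1 h1.2 kk' (Finset.mem_erase.2 ⟨hkk', Finset.mem_univ _⟩)
  exact this

theorem Pb_eq (j : Fin n) :
    Pb K iv j = spanMon K {e | Dblock iv e = Pi.single j 1} := by
  apply le_antisymm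
  · rw [Pb, Ideal.span_le]
    rintro x ⟨kk, rfl⟩
    show (X (⟨j, kk⟩ : (j : Fin n) × Fin (iv j)) : MvPolynomial _ K)
        ∈ spanMon K {e | Dblock iv e = Pi.single j 1}
    have : (X (⟨j, kk⟩ : (j : Fin n) × Fin (iv j)) : MvPolynomial _ K)
        = monomial (Finsupp.single ⟨j, kk⟩ 1) 1 := by
      rw [← pow_one (X (⟨j, kk⟩ : (j : Fin n) × Fin (iv j)) : MvPolynomial _ K),
        X_pow_eq_monomial]
    rw [this]
    exact Ideal.subset_span ⟨_, Dblock_single j kk, rfl⟩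
  · rw [spanMon, Ideal.span_le]
    rintro x ⟨e, he, rfl⟩
    have hD : Dblock iv e = Pi.single j 1 := he
    have hj : ∑ kk, e ⟨j, kk⟩ = 1 := by
      have := congrFun hD j
      simpa [Dblock, Pi.single_eq_same] using this
    obtain ⟨kk, hkk1, hkk0⟩ := sum_eq_one _ hj
    have heq : e = Finsupp.single (⟨j, kk⟩ : (j : Fin n) × Fin (iv j)) 1 := by
      ext p
      rcases p with ⟨j', kk'⟩
      rw [Finsupp.single_apply]
      rcases eq_or_ne j' j with rfl | hne
      · rcases eq_or_ne kk' kk with rfl | hne'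
        · rw [if_pos rfl]
          exact hkk1
        · rw [if_neg, hkk0 kk' hne']
          intro hcon
          exact hne' (eq_of_heq (Sigma.mk.inj_iff.1 hcon).2).symm
      · rw [if_neg]
        · have hblock := congrFun he j'
          simp only [Dblock] at hblock
          rw [Pi.single_eq_of_ne hne] at hblock
          have : e ⟨j', kk'⟩ ≤ ∑ kk'' : Fin (iv j'), e ⟨j', kk''⟩ :=
            Finset.single_le_sum (f := fun kk'' => e ⟨j', kk''⟩) (fun _ _ => Nat.zero_le _)
              (Finset.mem_univ kk')
          omega
        · intro hcon
          exact hne (Sigma.mk.inj_iff.1 hcon).1.symm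
    show (monomial e (1 : K)) ∈ Pb K iv j
    rw [heq]
    have : (monomial (Finsupp.single (⟨j, kk⟩ : (j : Fin n) × Fin (iv j)) 1) (1:K))
        = X ⟨j, kk⟩ := by
      rw [← pow_one (X (⟨j, kk⟩ : (j : Fin n) × Fin (iv j)) : MvPolynomial _ K),
        X_pow_eq_monomial]
    rw [this]
    exact Ideal.subset_span ⟨kk, rfl⟩

theorem Pb_pow_le (j : Fin n) (m : ℕ) :
    Pb K iv j ^ m ≤ spanMon K {e | Dblock iv e = Pi.single j m} := by
  rw [Pb_eq, spanMon_pow]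
  apply spanMon_mono
  rintro e ⟨g, hg, rfl⟩
  show Dblock iv (∑ i, g i) = Pi.single j m
  have : ∀ i, Dblock iv (g i) = Pi.single j 1 := hg
  clear hg
  induction m with
  | zero =>
    rw [Finset.univ_eq_empty, Finset.sum_empty, Pi.single_zero]
    funext j'
    simp [Dblock]
  | succ m ih =>
    rw [Fin.sum_univ_succ, Dblock_add, this 0]
    rw [ih (fun i => g i.succ) (fun i => this i.succ)]
    funext j'
    rcases eq_or_ne j' j with rfl | hne
    · simp only [Pi.add_apply, Pi.single_eq_same]
      omega
    · simp [Pi.single_eq_of_ne hne]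

theorem prodD (t : Finset (Fin n)) (b : Fin n → (Fin n → ℕ))
    (I : Fin n → Ideal (MvPolynomial ((j : Fin n) × Fin (iv j)) K))
    (h : ∀ j ∈ t, I j ≤ spanMon K {e | Dblock iv e = b j}) :
    ∏ j ∈ t, I j ≤ spanMon K {e | Dblock iv e = ∑ j ∈ t, b j} := by
  classical
  induction t using Finset.induction with
  | empty =>
    simp only [Finset.prod_empty, Finset.sum_empty]
    have h1 : (1 : MvPolynomial ((j : Fin n) × Fin (iv j)) K) ∈
        spanMon K {e | Dblock iv e = 0} := by
      have : (1 : MvPolynomial ((j : Fin n) × Fin (iv j)) K) = monomial 0 1 := by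
        simp
      rw [this]
      apply monomial_mem_spanMon 0 _ le_rfl
      show Dblock iv 0 = 0
      funext j'
      simp [Dblock]
    have h2 := (Ideal.eq_top_iff_one (spanMon K {e | Dblock iv e = (0 : Fin n → ℕ)})).2 h1
    rw [h2]
    exact le_top
  | @insert j t' hx ih =>
    rw [Finset.prod_insert hx, Finset.sum_insert hx]
    calc I j * ∏ j' ∈ t', I j'
        ≤ spanMon K {e | Dblock iv e = b j} * spanMon K {e | Dblock iv e = ∑ j' ∈ t', b j'} :=
          Ideal.mul_mono (h j (Finset.mem_insert_self _ _))
            (ih fun j' hj' => h j' (Finset.mem_insert_of_mem hj'))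
      _ = spanMon K ({e | Dblock iv e = b j} + {e | Dblock iv e = ∑ j' ∈ t', b j'}) :=
          spanMon_mul _ _
      _ ≤ spanMon K {e | Dblock iv e = b j + ∑ j' ∈ t', b j'} := by
          apply spanMon_mono
          rintro e ⟨e₁, he₁, e₂, he₂, rfl⟩
          show Dblock iv (e₁ + e₂) = _
          rw [Dblock_add, he₁, he₂]

theorem single_sigma_apply (j : Fin n) (kk kk' : Fin (iv j)) :
    (Finsupp.single (⟨j, kk⟩ : (j : Fin n) × Fin (iv j)) 1 : ((j : Fin n) × Fin (iv j)) →₀ ℕ)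
      ⟨j, kk'⟩ = if kk' = kk then 1 else 0 := by
  rw [Finsupp.single_apply]
  rcases eq_or_ne kk' kk with rfl | hne
  · simp
  · rw [if_neg, if_neg hne]
    intro hcon
    exact hne (eq_of_heq (Sigma.mk.inj_iff.1 hcon).2).symm

theorem prodXpow (a : Fin n → ℕ) :
    (∏ j, (X j : MvPolynomial (Fin n) K) ^ a j)
      = monomial (Finsupp.equivFunOnFinite.symm a) 1 := by
  rw [monomial_eq, C_1, one_mul, Finsupp.prod_pow]
  rfl

theorem monIdeal_eq (A : Set (Fin n → ℕ)) :
    monIdeal K A = spanMon K {e : Fin n →₀ ℕ | (fun j => e j) ∈ A} := by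
  rw [monIdeal, spanMon]
  congr 1
  ext x
  constructor
  · rintro ⟨a, ha, rfl⟩
    exact ⟨Finsupp.equivFunOnFinite.symm a, ha, (prodXpow a).symm⟩
  · rintro ⟨e, he, rfl⟩
    refine ⟨fun j => e j, he, ?_⟩
    show (∏ j, (X j : MvPolynomial (Fin n) K) ^ e j) = monomial e 1
    rw [prodXpow, Finsupp.equivFunOnFinite_symm_coe e]

noncomputable def eblk (iv : Fin n → ℕ) (e : ((j : Fin n) × Fin (iv j)) →₀ ℕ) (j : Fin n) :
    ((j : Fin n) × Fin (iv j)) →₀ ℕ :=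
  Finsupp.equivFunOnFinite.symm (fun p => if p.1 = j then e p else 0)

theorem sum_eblk (e : ((j : Fin n) × Fin (iv j)) →₀ ℕ) : ∑ j, eblk iv e j = e := by
  ext p
  rw [Finsupp.finset_sum_apply]
  have : ∀ j, eblk iv e j p = if p.1 = j then e p else 0 := fun j => rfl
  rw [Finset.sum_congr rfl fun j _ => this j, Finset.sum_ite_eq]
  simp

theorem monomial_mem_Pb_pow (j : Fin n) : ∀ (m : ℕ) (c : ((j : Fin n) × Fin (iv j)) →₀ ℕ),
    (∀ p, p.1 ≠ j → c p = 0) → (∑ kk, c ⟨j, kk⟩) = m → monomial c (1 : K) ∈ Pb K iv j ^ m := by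
  intro m
  induction m with
  | zero =>
    intro c hoff hD
    have hc : c = 0 := by
      apply Dblock_zero_eq
      funext j'
      rcases eq_or_ne j' j with rfl | hne
      · exact hD
      · exact Finset.sum_eq_zero fun kk _ => hoff ⟨j', kk⟩ hne
    rw [hc, pow_zero, Ideal.one_eq_top]
    exact Submodule.mem_top
  | succ m ih =>
    intro c hoff hD
    obtain ⟨kk, _, hkk⟩ := Finset.exists_ne_zero_of_sum_ne_zero
      (by omega : (∑ kk, c ⟨j, kk⟩) ≠ 0)
    have hle : Finsupp.single (⟨j, kk⟩ : (j : Fin n) × Fin (iv j)) 1 ≤ c := by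
      intro p
      rw [Finsupp.single_apply]
      by_cases hp : (⟨j, kk⟩ : (j : Fin n) × Fin (iv j)) = p
      · rw [if_pos hp, ← hp]
        omega
      · rw [if_neg hp]
        exact Nat.zero_le _
    set c' := c - Finsupp.single (⟨j, kk⟩ : (j : Fin n) × Fin (iv j)) 1 with hc'
    have happ : ∀ kk', c' ⟨j, kk'⟩ = c ⟨j, kk'⟩ - (if kk' = kk then 1 else 0) := by
      intro kk'
      rw [hc', Finsupp.tsub_apply, single_sigma_apply]
    have hoff' : ∀ p, p.1 ≠ j → c' p = 0 := by
      intro p hp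
      rw [hc', Finsupp.tsub_apply, hoff p hp]
      simp
    have hD' : (∑ kk', c' ⟨j, kk'⟩) = m := by
      rw [Finset.sum_congr rfl fun kk' _ => happ kk']
      rw [← Finset.add_sum_erase _ _ (Finset.mem_univ kk), if_pos rfl]
      have h2 : ∑ kk' ∈ Finset.univ.erase kk, (c ⟨j, kk'⟩ - if kk' = kk then 1 else 0)
          = ∑ kk' ∈ Finset.univ.erase kk, c ⟨j, kk'⟩ := by
        apply Finset.sum_congr rfl
        intro x hx
        rw [if_neg (Finset.ne_of_mem_erase hx)]
        omega
      rw [h2]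
      rw [← Finset.add_sum_erase _ (fun kk' => c ⟨j, kk'⟩) (Finset.mem_univ kk)] at hD
      omega
    have hfac : monomial c (1 : K) = monomial c' 1 * X ⟨j, kk⟩ := by
      have hX : (X (⟨j, kk⟩ : (j : Fin n) × Fin (iv j)) : MvPolynomial _ K)
          = monomial (Finsupp.single ⟨j, kk⟩ 1) 1 := by
        rw [← pow_one (X (⟨j, kk⟩ : (j : Fin n) × Fin (iv j)) : MvPolynomial _ K),
          X_pow_eq_monomial]
      rw [hX, monomial_mul, one_mul]
      congr 1
      rw [hc']
      rw [tsub_add_cancel_of_le hle]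
    rw [hfac, pow_succ]
    exact Ideal.mul_mem_mul (ih c' hoff' hD') (Ideal.subset_span ⟨kk, rfl⟩)

theorem expIdeal_eq (A : Set (Fin n → ℕ)) :
    expIdeal K iv A = spanMon K {e | Dblock iv e ∈ A} := by
  apply le_antisymm
  · rw [expIdeal]
    apply iSup₂_le
    intro a ha
    have h1 : (∏ j, Pb K iv j ^ a j : Ideal (MvPolynomial ((j : Fin n) × Fin (iv j)) K))
        ≤ spanMon K {e | Dblock iv e = ∑ j, Pi.single j (a j)} :=
      prodD Finset.univ (fun j => Pi.single j (a j)) (fun j => Pb K iv j ^ a j)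
        (fun j _ => Pb_pow_le j (a j))
    refine le_trans h1 (spanMon_mono ?_)
    intro e he
    show Dblock iv e ∈ A
    have h2 : Dblock iv e = ∑ j, Pi.single j (a j) := he
    rw [h2, Finset.univ_sum_single]
    exact ha
  · rw [spanMon, Ideal.span_le]
    rintro x ⟨e, he, rfl⟩
    show (monomial e (1 : K)) ∈ expIdeal K iv A
    have hfac : monomial e (1 : K) = ∏ j, monomial (eblk iv e j) 1 := by
      rw [prod_monomial, sum_eblk]
    rw [hfac]
    have hmem : ∏ j, monomial (eblk iv e j) (1 : K) ∈ ∏ j, Pb K iv j ^ (Dblock iv e j) := by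
      apply Ideal.prod_mem_prod
      intro j _
      apply monomial_mem_Pb_pow
      · intro p hp
        show (if p.1 = j then e p else 0) = 0
        rw [if_neg hp]
      · show (∑ kk : Fin (iv j), if (⟨j, kk⟩ : (j : Fin n) × Fin (iv j)).1 = j
            then e ⟨j, kk⟩ else 0) = Dblock iv e j
        simp [Dblock]
    refine (?_ : _ ≤ expIdeal K iv A) hmem
    exact le_iSup₂_of_le (Dblock iv e) he le_rfl

def Trans (A : Set (Fin n → ℕ)) (F : Finset (Fin n)) : Prop := ∀ a ∈ A, ∃ j ∈ F, a j ≠ 0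

def MinTrans (A : Set (Fin n → ℕ)) (F : Finset (Fin n)) : Prop :=
  Trans A F ∧ ∀ F' ⊆ F, Trans A F' → F' = F

@[reducible] noncomputable def pS (K : Type*) [Field K] {n : ℕ} (F : Finset (Fin n)) :
    Ideal (MvPolynomial (Fin n) K) := spanX K {j | j ∈ F}

@[reducible] noncomputable def pE (K : Type*) [Field K] {n : ℕ} (iv : Fin n → ℕ) (F : Finset (Fin n)) :
    Ideal (MvPolynomial ((j : Fin n) × Fin (iv j)) K) := spanX K {p | p.1 ∈ F}

theorem pS_le_pS {F F' : Finset (Fin n)} : pS K F ≤ pS K F' ↔ F ⊆ F' := by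
  constructor
  · intro h j hj
    have := h (X_mem_spanX.2 (by exact hj))
    exact X_mem_spanX.1 this
  · intro h
    exact Ideal.span_mono (Set.image_mono fun j hj => h hj)

theorem Pb_le_pE (hiv : ∀ j, 0 < iv j) {F : Finset (Fin n)} {j : Fin n} :
    Pb K iv j ≤ pE K iv F ↔ j ∈ F := by
  constructor
  · intro h
    have hmem : (X (⟨j, ⟨0, hiv j⟩⟩ : (j : Fin n) × Fin (iv j)) : MvPolynomial _ K) ∈ Pb K iv j :=
      Ideal.subset_span ⟨⟨0, hiv j⟩, rfl⟩
    exact (X_mem_spanX (V := {p : (j : Fin n) × Fin (iv j) | p.1 ∈ F})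
      (j := ⟨j, ⟨0, hiv j⟩⟩)).1 (h hmem)
  · intro h
    rw [Pb, Ideal.span_le]
    rintro x ⟨kk, rfl⟩
    exact X_mem_spanX.2 (by exact h)

theorem pE_le_pE (hiv : ∀ j, 0 < iv j) {F F' : Finset (Fin n)} :
    pE K iv F ≤ pE K iv F' ↔ F ⊆ F' := by
  constructor
  · intro h j hj
    exact (Pb_le_pE hiv).1 (le_trans ((Pb_le_pE hiv).2 hj) h)
  · intro h
    exact Ideal.span_mono (Set.image_mono fun p hp => h hp)

theorem monIdeal_le_pS {A : Set (Fin n → ℕ)} {F : Finset (Fin n)} :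
    monIdeal K A ≤ pS K F ↔ Trans A F := by
  rw [monIdeal_eq]
  constructor
  · intro h a ha
    have hmem : monomial (Finsupp.equivFunOnFinite.symm a) (1 : K)
        ∈ spanMon K {e : Fin n →₀ ℕ | (fun j => e j) ∈ A} :=
      monomial_mem_spanMon _ (by exact ha) le_rfl 1
    have := mem_spanX.1 (h hmem) (Finsupp.equivFunOnFinite.symm a)
      (by rw [support_monomial, if_neg one_ne_zero]; simp)
    obtain ⟨j, hj, hne⟩ := this
    exact ⟨j, hj, hne⟩
  · intro htr f hf
    rw [mem_spanX]
    intro m hm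
    obtain ⟨e, he, hle⟩ := mem_spanMon.1 hf m hm
    obtain ⟨j, hj, hne⟩ := htr _ he
    exact ⟨j, hj, fun h0 => hne (Nat.le_zero.1 (h0 ▸ hle j))⟩

theorem expIdeal_le_pE (hiv : ∀ j, 0 < iv j) {A : Set (Fin n → ℕ)} {F : Finset (Fin n)} :
    expIdeal K iv A ≤ pE K iv F ↔ Trans A F := by
  rw [expIdeal_eq]
  constructor
  · intro h a ha
    set ea : ((j : Fin n) × Fin (iv j)) →₀ ℕ :=
      Finsupp.equivFunOnFinite.symm (fun p => if p.2 = (⟨0, hiv p.1⟩ : Fin (iv p.1))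
        then a p.1 else 0) with hea
    have hDea : Dblock iv ea = a := by
      funext j
      show (∑ kk : Fin (iv j), if kk = (⟨0, hiv j⟩ : Fin (iv j)) then a j else 0) = a j
      rw [sum_ite_point]
      simp
    have hmem : monomial ea (1 : K) ∈ spanMon K {e | Dblock iv e ∈ A} :=
      monomial_mem_spanMon _ (by rw [Set.mem_setOf_eq, hDea]; exact ha) le_rfl 1
    obtain ⟨p, hp, hne⟩ := mem_spanX.1 (h hmem) ea
      (by rw [support_monomial, if_neg one_ne_zero]; simp)
    refine ⟨p.1, hp, ?_⟩
    intro h0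
    apply hne
    show (if p.2 = (⟨0, hiv p.1⟩ : Fin (iv p.1)) then a p.1 else 0) = 0
    rw [h0]
    simp
  · intro htr f hf
    rw [mem_spanX]
    intro m hm
    obtain ⟨e, he, hle⟩ := mem_spanMon.1 hf m hm
    obtain ⟨j, hj, hne⟩ := htr _ he
    have : ∃ kk : Fin (iv j), e ⟨j, kk⟩ ≠ 0 := by
      by_contra hcon
      push_neg at hcon
      exact hne (Finset.sum_eq_zero fun kk _ => hcon kk)
    obtain ⟨kk, hkk⟩ := this
    exact ⟨⟨j, kk⟩, hj, fun h0 => hkk (Nat.le_zero.1 (h0 ▸ hle ⟨j, kk⟩))⟩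

theorem prod_mem_prime {R : Type*} [CommRing R] {p : Ideal R} (hp : p.IsPrime)
    {ι : Type*} (t : Finset ι) (g : ι → R) (h : ∏ j ∈ t, g j ∈ p) : ∃ j ∈ t, g j ∈ p := by
  classical
  induction t using Finset.induction with
  | empty =>
    rw [Finset.prod_empty] at h
    exact absurd ((Ideal.eq_top_iff_one _).2 h) hp.ne_top
  | @insert j t' hx ih =>
    rw [Finset.prod_insert hx] at h
    rcases hp.mem_or_mem h with h1 | h1
    · exact ⟨j, Finset.mem_insert_self _ _, h1⟩
    · obtain ⟨j', hj', hmem⟩ := ih h1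
      exact ⟨j', Finset.mem_insert_of_mem hj', hmem⟩

theorem prime_over_monIdeal {A : Set (Fin n → ℕ)} {p : Ideal (MvPolynomial (Fin n) K)}
    (hp : p.IsPrime) (hle : monIdeal K A ≤ p) :
    Trans A (Finset.univ.filter fun j => X j ∈ p) ∧
      pS K (Finset.univ.filter fun j => X j ∈ p) ≤ p := by
  constructor
  · intro a ha
    have hmem : (∏ j, (X j : MvPolynomial (Fin n) K) ^ a j) ∈ p :=
      hle (Ideal.subset_span ⟨a, ha, rfl⟩)
    obtain ⟨j, _, hj⟩ := prod_mem_prime hp Finset.univ _ hmem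
    have hane : a j ≠ 0 := by
      intro h0
      rw [h0, pow_zero] at hj
      exact hp.ne_top ((Ideal.eq_top_iff_one _).2 hj)
    refine ⟨j, Finset.mem_filter.2 ⟨Finset.mem_univ _, hp.mem_of_pow_mem _ hj⟩, hane⟩
  · rw [pS, spanX, Ideal.span_le]
    rintro x ⟨j, hj, rfl⟩
    have : j ∈ Finset.univ.filter fun j => (X j : MvPolynomial (Fin n) K) ∈ p := hj
    exact (Finset.mem_filter.1 this).2

theorem prime_over_expIdeal {A : Set (Fin n → ℕ)}
    {Q : Ideal (MvPolynomial ((j : Fin n) × Fin (iv j)) K)}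
    (hp : Q.IsPrime) (hle : expIdeal K iv A ≤ Q) :
    Trans A (Finset.univ.filter fun j => Pb K iv j ≤ Q) ∧
      pE K iv (Finset.univ.filter fun j => Pb K iv j ≤ Q) ≤ Q := by
  constructor
  · intro a ha
    have hprodle : (∏ j, Pb K iv j ^ a j) ≤ Q :=
      le_trans (le_iSup₂_of_le a ha le_rfl) hle
    obtain ⟨j, _, hj⟩ := (hp.prod_le).1 hprodle
    have hane : a j ≠ 0 := by
      intro h0
      rw [h0, pow_zero, Ideal.one_eq_top, top_le_iff] at hj
      exact hp.ne_top hj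
    refine ⟨j, Finset.mem_filter.2 ⟨Finset.mem_univ _, hp.le_of_pow_le hj⟩, hane⟩
  · rw [pE, spanX, Ideal.span_le]
    rintro x ⟨q, hq, rfl⟩
    have hq' : q.1 ∈ Finset.univ.filter fun j => Pb K iv j ≤ Q := hq
    have hPb : Pb K iv q.1 ≤ Q := (Finset.mem_filter.1 hq').2
    exact hPb (Ideal.subset_span ⟨q.2, rfl⟩)

theorem minimalPrimes_monIdeal (A : Set (Fin n → ℕ)) :
    (monIdeal K A).minimalPrimes = {P | ∃ F, MinTrans A F ∧ P = pS K F} := by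
  ext P
  constructor
  · rintro ⟨⟨hprime, hle⟩, hmin⟩
    set F := Finset.univ.filter fun j => (X j : MvPolynomial (Fin n) K) ∈ P with hF
    obtain ⟨htr, hFle⟩ := prime_over_monIdeal hprime hle
    have hPF : P = pS K F := by
      have h1 : P ≤ pS K F :=
        hmin ⟨spanX_isPrime _, monIdeal_le_pS.2 htr⟩ hFle
      exact le_antisymm h1 hFle
    refine ⟨F, ⟨htr, ?_⟩, hPF⟩
    intro F' hsub htr'
    have h1 : pS K F' ≤ pS K F := pS_le_pS.2 hsub
    have h2 : P ≤ pS K F' := hmin ⟨spanX_isPrime _, monIdeal_le_pS.2 htr'⟩ (hPF ▸ h1)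
    have h3 : pS K F ≤ pS K F' := hPF ▸ h2
    exact Finset.Subset.antisymm hsub (pS_le_pS.1 h3)
  · rintro ⟨F, ⟨htr, hmint⟩, rfl⟩
    refine ⟨⟨spanX_isPrime _, monIdeal_le_pS.2 htr⟩, ?_⟩
    rintro Q ⟨hQprime, hQle⟩ hQP
    set F' := Finset.univ.filter fun j => (X j : MvPolynomial (Fin n) K) ∈ Q with hF'
    obtain ⟨htr', hF'le⟩ := prime_over_monIdeal hQprime hQle
    have hsub : F' ⊆ F := by
      intro j hj
      have : (X j : MvPolynomial (Fin n) K) ∈ Q := (Finset.mem_filter.1 hj).2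
      have : (X j : MvPolynomial (Fin n) K) ∈ pS K F := hQP this
      exact X_mem_spanX.1 this
    have : F' = F := hmint F' hsub htr'
    rw [← this]
    exact hF'le

theorem minimalPrimes_expIdeal (hiv : ∀ j, 0 < iv j) (A : Set (Fin n → ℕ)) :
    (expIdeal K iv A).minimalPrimes = {P | ∃ F, MinTrans A F ∧ P = pE K iv F} := by
  ext P
  constructor
  · rintro ⟨⟨hprime, hle⟩, hmin⟩
    set F := Finset.univ.filter fun j => Pb K iv j ≤ P with hF
    obtain ⟨htr, hFle⟩ := prime_over_expIdeal hprime hle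
    have hPF : P = pE K iv F := by
      have h1 : P ≤ pE K iv F :=
        hmin ⟨spanX_isPrime _, (expIdeal_le_pE hiv).2 htr⟩ hFle
      exact le_antisymm h1 hFle
    refine ⟨F, ⟨htr, ?_⟩, hPF⟩
    intro F' hsub htr'
    have h1 : pE K iv F' ≤ pE K iv F := (pE_le_pE hiv).2 hsub
    have h2 : P ≤ pE K iv F' := hmin ⟨spanX_isPrime _, (expIdeal_le_pE hiv).2 htr'⟩ (hPF ▸ h1)
    have h3 : pE K iv F ≤ pE K iv F' := hPF ▸ h2
    exact Finset.Subset.antisymm hsub ((pE_le_pE hiv).1 h3)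
  · rintro ⟨F, ⟨htr, hmint⟩, rfl⟩
    refine ⟨⟨spanX_isPrime _, (expIdeal_le_pE hiv).2 htr⟩, ?_⟩
    rintro Q ⟨hQprime, hQle⟩ hQP
    set F' := Finset.univ.filter fun j => Pb K iv j ≤ Q with hF'
    obtain ⟨htr', hF'le⟩ := prime_over_expIdeal hQprime hQle
    have hsub : F' ⊆ F := by
      intro j hj
      have h1 : Pb K iv j ≤ Q := (Finset.mem_filter.1 hj).2
      have h2 : Pb K iv j ≤ pE K iv F := le_trans h1 hQP
      exact (Pb_le_pE hiv).1 h2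
    have : F' = F := hmint F' hsub htr'
    rw [← this]
    exact hF'le

theorem Dblock_sum {k : ℕ} (ge : Fin k → (((j : Fin n) × Fin (iv j)) →₀ ℕ)) (j : Fin n) :
    Dblock iv (∑ i, ge i) j = ∑ i, Dblock iv (ge i) j := by
  simp only [Dblock]
  rw [Finset.sum_congr rfl fun kk _ => Finsupp.finset_sum_apply _ _ _]
  rw [Finset.sum_comm]

theorem charS (A : Set (Fin n → ℕ)) (k : ℕ) (f : MvPolynomial (Fin n) K) :
    f ∈ symbolicPower (monIdeal K A) k ↔
      ∀ d ∈ f.support, ∀ F : Finset (Fin n), MinTrans A F →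
        ∃ g : Fin k → (Fin n → ℕ), (∀ i, g i ∈ A) ∧ ∀ j ∈ F, (∑ i, g i j) ≤ d j := by
  have hpow : (monIdeal K A) ^ k = spanMon K (kSum {e : Fin n →₀ ℕ | (fun j => e j) ∈ A} k) := by
    rw [monIdeal_eq, spanMon_pow]
  constructor
  · rintro ⟨s, hsmin, hsf⟩ d hd F hmt
    have hsF : s ∉ pS K F := hsmin _ (by rw [minimalPrimes_monIdeal]; exact ⟨F, hmt, rfl⟩)
    rw [hpow] at hsf
    obtain ⟨u, hu, hule⟩ := colon {j | j ∈ F} _ s f hsF hsf d hd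
    obtain ⟨ge, hge, rfl⟩ := hu
    refine ⟨fun i j => ge i j, fun i => hge i, ?_⟩
    intro j hj
    have h1 : (∑ i, ge i) j = ∑ i, ge i j := Finsupp.finset_sum_apply _ _ _
    have h2 := hule j hj
    show (∑ i, ge i j) ≤ d j
    omega
  · intro h
    rw [show f = ∑ d ∈ f.support, monomial d (coeff d f) from (as_sum f)]
    apply Ideal.sum_mem
    intro d hd
    have hmon : (monomial d (1 : K)) ∈ symbolicPower (monIdeal K A) k := by
      set 𝔉 : Finset (Finset (Fin n)) := Finset.univ.filter (fun F => MinTrans A F) with h𝔉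
      obtain ⟨s, hsnot, hsmem⟩ := build (K := K) 𝔉 (fun F => {j | j ∈ F})
        (fun F _ F' _ hVeq => by
          ext j
          constructor
          · intro hj; exact (Set.ext_iff.1 hVeq j).1 hj
          · intro hj; exact (Set.ext_iff.1 hVeq j).2 hj)
        (kSum {e : Fin n →₀ ℕ | (fun j => e j) ∈ A} k) d
        (fun F hF => by
          obtain ⟨g, hg, hgle⟩ := h d hd F (Finset.mem_filter.1 hF).2
          refine ⟨∑ i, Finsupp.equivFunOnFinite.symm (g i),
            ⟨fun i => Finsupp.equivFunOnFinite.symm (g i), fun i => hg i, rfl⟩, ?_⟩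
          intro j hj
          have h1 : (∑ i, Finsupp.equivFunOnFinite.symm (g i)) j
              = ∑ i, (Finsupp.equivFunOnFinite.symm (g i)) j := Finsupp.finset_sum_apply _ _ _
          have h2 : ∑ i, (Finsupp.equivFunOnFinite.symm (g i)) j = ∑ i, g i j := rfl
          have := hgle j hj
          omega)
      refine ⟨s, ?_, ?_⟩
      · intro P hP
        rw [minimalPrimes_monIdeal] at hP
        obtain ⟨F, hmt, rfl⟩ := hP
        exact hsnot F (Finset.mem_filter.2 ⟨Finset.mem_univ _, hmt⟩)
      · rw [hpow]
        exact hsmem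
    have : (monomial d (coeff d f)) = C (coeff d f) * monomial d 1 := by
      rw [C_mul_monomial, mul_one]
    rw [this]
    exact Ideal.mul_mem_left _ _ hmon

theorem charE (hiv : ∀ j, 0 < iv j) (A : Set (Fin n → ℕ)) (k : ℕ)
    (f : MvPolynomial ((j : Fin n) × Fin (iv j)) K) :
    f ∈ symbolicPower (expIdeal K iv A) k ↔
      ∀ d ∈ f.support, ∀ F : Finset (Fin n), MinTrans A F →
        ∃ g : Fin k → (Fin n → ℕ), (∀ i, g i ∈ A) ∧
          ∀ j ∈ F, (∑ i, g i j) ≤ Dblock iv d j := by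
  have hpow : (expIdeal K iv A) ^ k
      = spanMon K (kSum {e | Dblock iv e ∈ A} k) := by
    rw [expIdeal_eq, spanMon_pow]
  constructor
  · rintro ⟨s, hsmin, hsf⟩ d hd F hmt
    have hsF : s ∉ pE K iv F := hsmin _
      (by rw [minimalPrimes_expIdeal hiv]; exact ⟨F, hmt, rfl⟩)
    rw [hpow] at hsf
    obtain ⟨u, hu, hule⟩ := colon {p : (j : Fin n) × Fin (iv j) | p.1 ∈ F}
      (kSum {e | Dblock iv e ∈ A} k) s f hsF hsf d hd
    obtain ⟨ge, hge, rfl⟩ := hu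
    refine ⟨fun i => Dblock iv (ge i), fun i => hge i, ?_⟩
    intro j hj
    have h1 : ∑ i, Dblock iv (ge i) j = Dblock iv (∑ i, ge i) j := (Dblock_sum ge j).symm
    have h2 : Dblock iv (∑ i, ge i) j ≤ Dblock iv d j := by
      apply Finset.sum_le_sum
      intro kk _
      exact hule ⟨j, kk⟩ hj
    show (∑ i, Dblock iv (ge i) j) ≤ Dblock iv d j
    omega
  · intro h
    rw [show f = ∑ d ∈ f.support, monomial d (coeff d f) from (as_sum f)]
    apply Ideal.sum_mem
    intro d hd
    have hmon : (monomial d (1 : K)) ∈ symbolicPower (expIdeal K iv A) k := by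
      set 𝔉 : Finset (Finset (Fin n)) := Finset.univ.filter (fun F => MinTrans A F) with h𝔉
      obtain ⟨s, hsnot, hsmem⟩ := build (K := K) 𝔉
        (fun F => {p : (j : Fin n) × Fin (iv j) | p.1 ∈ F})
        (fun F _ F' _ hVeq => by
          ext j
          constructor
          · intro hj
            exact (Set.ext_iff.1 hVeq ⟨j, ⟨0, hiv j⟩⟩).1 hj
          · intro hj
            exact (Set.ext_iff.1 hVeq ⟨j, ⟨0, hiv j⟩⟩).2 hj)
        (kSum {e | Dblock iv e ∈ A} k) d
        (fun F hF => by
          obtain ⟨g, hg, hgle⟩ := h d hd F (Finset.mem_filter.1 hF).2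
          -- build u
          have hch : ∀ j : Fin n, j ∈ F → ∃ h' : Fin (iv j) → ℕ,
              (∀ kk, h' kk ≤ d ⟨j, kk⟩) ∧ ∑ kk, h' kk = ∑ i, g i j := by
            intro j hj
            exact selectFin _ _ (hgle j hj)
          set ch : ∀ j : Fin n, Fin (iv j) → ℕ := fun j =>
            if hj : j ∈ F then (hch j hj).choose else
              (fun kk => if kk = (⟨0, hiv j⟩ : Fin (iv j)) then ∑ i, g i j else 0) with hch'
          set u : ((j : Fin n) × Fin (iv j)) →₀ ℕ :=
            Finsupp.equivFunOnFinite.symm (fun p => ch p.1 p.2) with hu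
          have hDu : Dblock iv u = fun j => ∑ i, g i j := by
            funext j
            show (∑ kk, ch j kk) = ∑ i, g i j
            by_cases hj : j ∈ F
            · simp only [hch', dif_pos hj]
              exact (hch j hj).choose_spec.2
            · simp only [hch', dif_neg hj]
              rw [sum_ite_point]
              simp
          obtain ⟨ge, hge, hgesum⟩ := split2 k u (fun i => g i)
            (by rw [hDu]; funext j; exact (Finset.sum_apply _ _ _).symm)
          refine ⟨u, ⟨ge, fun i => by rw [Set.mem_setOf_eq, hge i]; exact hg i, hgesum⟩, ?_⟩
          rintro ⟨j, kk⟩ hj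
          have hjF : j ∈ F := hj
          show ch j kk ≤ d ⟨j, kk⟩
          simp only [hch', dif_pos hjF]
          exact (hch j hjF).choose_spec.1 kk)
      refine ⟨s, ?_, ?_⟩
      · intro P hP
        rw [minimalPrimes_expIdeal hiv] at hP
        obtain ⟨F, hmt, rfl⟩ := hP
        exact hsnot F (Finset.mem_filter.2 ⟨Finset.mem_univ _, hmt⟩)
      · rw [hpow]
        exact hsmem
    have : (monomial d (coeff d f)) = C (coeff d f) * monomial d 1 := by
      rw [C_mul_monomial, mul_one]
    rw [this]
    exact Ideal.mul_mem_left _ _ hmon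

end ExpAux

/-- Corollary 1.4: `(I^{(k)})^* = (I^*)^{(k)}`: if the monomial ideal generated by the
monomials `x^c`, `c ∈ C`, equals the `k`-th symbolic power of `I`, then its expansion is the
`k`-th symbolic power of `I^*`. -/
theorem expIdeal_symbolicPower (K : Type*) [Field K] {n : ℕ} (iv : Fin n → ℕ)
    (hiv : ∀ j, 0 < iv j) (A C : Set (Fin n → ℕ)) (k : ℕ) (hk : 1 ≤ k)
    (hC : monIdeal K C = symbolicPower (monIdeal K A) k) :
    expIdeal K iv C = symbolicPower (expIdeal K iv A) k := by
  ext f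
  rw [ExpAux.expIdeal_eq C, ExpAux.mem_spanMon, ExpAux.charE hiv A k f]
  apply forall_congr'
  intro d
  apply imp_congr_right
  intro hd
  -- LHS: ∃ e ∈ {e | Dblock iv e ∈ C}, e ≤ d
  have step1 : (∃ e ∈ {e | ExpAux.Dblock iv e ∈ C}, e ≤ d)
      ↔ ∃ c ∈ C, ∀ j, c j ≤ ExpAux.Dblock iv d j := by
    constructor
    · rintro ⟨e, he, hle⟩
      exact ⟨ExpAux.Dblock iv e, he, fun j => ExpAux.Dblock_mono hle j⟩
    · rintro ⟨c, hc, hle⟩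
      obtain ⟨e, hle', hD⟩ := ExpAux.split1 d c hle
      exact ⟨e, by rw [Set.mem_setOf_eq, hD]; exact hc, hle'⟩
  rw [step1]
  have step2 : (∃ c ∈ C, ∀ j, c j ≤ ExpAux.Dblock iv d j)
      ↔ (monomial (Finsupp.equivFunOnFinite.symm (ExpAux.Dblock iv d)) (1 : K)
          ∈ monIdeal K C) := by
    rw [ExpAux.monIdeal_eq, ExpAux.mem_spanMon]
    constructor
    · rintro ⟨c, hc, hle⟩ m hm
      rw [support_monomial, if_neg one_ne_zero, Finset.mem_singleton] at hm
      subst hm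
      refine ⟨Finsupp.equivFunOnFinite.symm c, hc, ?_⟩
      intro j
      exact hle j
    · intro hall
      obtain ⟨e, he, hle⟩ := hall (Finsupp.equivFunOnFinite.symm (ExpAux.Dblock iv d))
        (by rw [support_monomial, if_neg one_ne_zero]; simp)
      refine ⟨fun j => e j, he, ?_⟩
      intro j
      exact hle j
  rw [step2, hC, ExpAux.charS A k]
  constructor
  · intro hall F hmt
    have := hall (Finsupp.equivFunOnFinite.symm (ExpAux.Dblock iv d))
      (by rw [support_monomial, if_neg one_ne_zero]; simp) F hmt
    obtain ⟨g, hg, hgle⟩ := this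
    exact ⟨g, hg, fun j hj => hgle j hj⟩
  · intro hall m hm F hmt
    rw [support_monomial, if_neg one_ne_zero, Finset.mem_singleton] at hm
    subst hm
    obtain ⟨g, hg, hgle⟩ := hall F hmt
    exact ⟨g, hg, fun j hj => hgle j hj⟩
end
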